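/- arXiv:1902.03694 — 3 statements merged into one kernel-verified Lean document; each statement's English description precedes it below -/
import Mathlib

section
/- Let 0 < μ ≤ L, let f be μ-strongly convex with L-Lipschitz gradient on ℝⁿ, with minimizer x⋆, and take step size s = 1/L. Then the iterates of the implicit Euler scheme for the high-resolution heavy-ball ODE satisfy, for every k ≥ 0, f(x_k) − f(x⋆) ≤ 15L‖x₀ − x⋆‖² / (4 (1 + (1/4)√(μ/L))^k). -/
set_option maxHeartbeats 1000000

open scoped RealInnerProductSpace

lemma scalar_key (b m F D p q r3 n1 n2 n3 : ℝ) (hb : 0 < b) (hm : 0 < m)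
    (h1 : 0 ≤ D + b*p - m^2*b^2/2*n1)
    (h2 : 0 ≤ q - F - m^2/2*n2)
    (hF : 0 ≤ F) (hAM : 0 ≤ n1 - 4*m*r3 + 4*m^2*n2)
    (hd : 0 ≤ 4*(b*m)^2*n1 + 4*(b*m)*(b*(1+b*m))*p + (b*(1+b*m))^2*n3)
    (hn1 : 0 ≤ n1) (hn2 : 0 ≤ n2) (hn3 : 0 ≤ n3) :
    (1+(b*m)/4) * ((1+b*m)*F + 1/4*n1 + 1/4*(n1+4*m*r3+4*m^2*n2)) ≤
    (1+b*m)*(F+D) + 1/4*((1+2*b*m)^2*n1 + 2*(1+2*b*m)*(b*(1+b*m))*p + (b*(1+b*m))^2*n3)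
      + 1/4*(n1 + 2*(b*(1+b*m))*p + 4*m*r3 + (b*(1+b*m))^2*n3 + 4*m^2*n2 + 4*m*(b*(1+b*m))*q) := by
  nlinarith [mul_nonneg (by positivity : (0:ℝ) ≤ 1+b*m) h1,
             mul_nonneg (by positivity : (0:ℝ) ≤ b*m*(1+b*m)) h2,
             mul_nonneg (by positivity : (0:ℝ) ≤ 3*(b*m)*(1+b*m)/4) hF,
             mul_nonneg (by positivity : (0:ℝ) ≤ (b*m)/16) hAM,
             mul_nonneg (by positivity : (0:ℝ) ≤ (b*m)^2*m^2/2) hn2,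
             mul_nonneg (by positivity : (0:ℝ) ≤ 13/16*(b*m) + (b*m)^2/2 + (b*m)^3/2) hn1,
             mul_nonneg (by positivity : (0:ℝ) ≤ (b*(1+b*m))^2/4) hn3,
             hd]

variable {H : Type*} [NormedAddCommGroup H] [InnerProductSpace ℝ H]

lemma expand2 (α β : ℝ) (u w : H) :
    ‖α•u + β•w‖^2 = α^2*‖u‖^2 + 2*α*β*⟪u,w⟫ + β^2*‖w‖^2 := by
  rw [norm_add_sq_real]
  simp [norm_smul, real_inner_smul_left, real_inner_smul_right, mul_pow, sq_abs]
  ring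

lemma expand3 (α β γ : ℝ) (u w z : H) :
    ‖α•u + β•w + γ•z‖^2 = α^2*‖u‖^2 + 2*α*β*⟪u,w⟫ + 2*α*γ*⟪u,z⟫ + β^2*‖w‖^2
      + 2*β*γ*⟪w,z⟫ + γ^2*‖z‖^2 := by
  rw [norm_add_sq_real, norm_add_sq_real]
  simp [norm_smul, real_inner_smul_left, real_inner_smul_right, inner_add_left, mul_pow, sq_abs]
  ring

lemma step_lemma (μ m b : ℝ) (hm : 0 < m) (hb : 0 < b) (hm2 : m^2 = μ)
    (f : H → ℝ) (f' : H → H) (S : H) (hminS : ∀ z, f S ≤ f z)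
    (hsc : ∀ z w, f w ≥ f z + ⟪f' z, w - z⟫ + μ/2*‖w-z‖^2)
    (X X' V V' : H)
    (hx : X' - X = b • V')
    (hv : V' - V = -((2*(m*b)) • V') - (b*(1+m*b)) • f' X') :
    (1+(m*b)/4) * ((1+m*b)*(f X' - f S) + 1/4*‖V'‖^2 + 1/4*‖V' + (2*m)•(X'-S)‖^2)
    ≤ (1+m*b)*(f X - f S) + 1/4*‖V‖^2 + 1/4*‖V + (2*m)•(X-S)‖^2 := by
  have hXX' : X - X' = (-b)•V' := by
    rw [neg_smul, ← hx]; abel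
  have e1 : V = (1+2*(b*m))•V' + (b*(1+b*m))•(f' X') := by
    have h2 : V = V' - (V' - V) := by abel
    rw [hv] at h2; rw [h2]; module
  have e2 : X - S = (X' - S) - b•V' := by
    rw [← hx]; abel
  have hV2 : ‖V‖^2 = (1+2*(b*m))^2*‖V'‖^2 + 2*(1+2*(b*m))*(b*(1+b*m))*⟪V',f' X'⟫
      + (b*(1+b*m))^2*‖f' X'‖^2 := by
    rw [e1, expand2]
  have hWeq : V + (2*m)•(X-S) = (1:ℝ)•V' + (b*(1+b*m))•(f' X') + (2*m)•(X'-S) := by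
    rw [e1, e2]; module
  have hW2 : ‖V + (2*m)•(X-S)‖^2 = ‖V'‖^2 + 2*(b*(1+b*m))*⟪V',f' X'⟫ + 4*m*⟪V',X'-S⟫
      + (b*(1+b*m))^2*‖f' X'‖^2 + 4*m^2*‖X'-S‖^2 + 4*m*(b*(1+b*m))*⟪f' X',X'-S⟫ := by
    rw [hWeq, expand3]; ring
  have hW'2 : ‖V' + (2*m)•(X'-S)‖^2 = ‖V'‖^2 + 4*m*⟪V',X'-S⟫ + 4*m^2*‖X'-S‖^2 := by
    rw [show V' + (2*m)•(X'-S) = (1:ℝ)•V' + (2*m)•(X'-S) by module, expand2]; ring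
  have hip : ⟪f' X', X - X'⟫ = -(b*⟪V', f' X'⟫) := by
    rw [hXX', real_inner_smul_right, real_inner_comm]; ring
  have hnm : ‖X - X'‖^2 = b^2*‖V'‖^2 := by
    rw [hXX', norm_smul]; simp [mul_pow, sq_abs]
  have h1 : 0 ≤ (f X - f X') + b*⟪V',f' X'⟫ - m^2*b^2/2*‖V'‖^2 := by
    have h := hsc X' X
    rw [← hm2] at h
    rw [hip, hnm] at h
    linarith
  have h2 : 0 ≤ ⟪f' X', X'-S⟫ - (f X' - f S) - m^2/2*‖X'-S‖^2 := by
    have h := hsc X' S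
    rw [← hm2] at h
    have hS : ⟪f' X', S - X'⟫ = -⟪f' X', X'-S⟫ := by
      rw [show S - X' = -(X'-S) by abel, inner_neg_right]
    have hn : ‖S - X'‖^2 = ‖X'-S‖^2 := by rw [norm_sub_rev]
    rw [hS, hn] at h
    linarith
  have hF : 0 ≤ f X' - f S := by have := hminS X'; linarith
  have hAM : 0 ≤ ‖V'‖^2 - 4*m*⟪V',X'-S⟫ + 4*m^2*‖X'-S‖^2 := by
    have h := expand2 (1:ℝ) (-(2*m)) V' (X'-S)
    have h0 : 0 ≤ ‖(1:ℝ)•V' + (-(2*m))•(X'-S)‖^2 := by positivity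
    rw [h] at h0; linarith
  have hd : 0 ≤ 4*(b*m)^2*‖V'‖^2 + 4*(b*m)*(b*(1+b*m))*⟪V',f' X'⟫ + (b*(1+b*m))^2*‖f' X'‖^2 := by
    have h := expand2 (2*(b*m)) (b*(1+b*m)) V' (f' X')
    have h0 : 0 ≤ ‖(2*(b*m))•V' + (b*(1+b*m))•(f' X')‖^2 := by positivity
    rw [h] at h0; linarith
  have key := scalar_key b m (f X' - f S) (f X - f X') ⟪V',f' X'⟫ ⟪f' X',X'-S⟫ ⟪V',X'-S⟫
    (‖V'‖^2) (‖X'-S‖^2) (‖f' X'‖^2) hb hm h1 h2 hF hAM hd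
    (by positivity) (by positivity) (by positivity)
  rw [hV2, hW2, hW'2]
  linarith [key]

theorem stmt5
    {n : ℕ} (μ L : ℝ) (hμ : 0 < μ) (hμL : μ ≤ L)
    (f : EuclideanSpace ℝ (Fin n) → ℝ)
    (f' : EuclideanSpace ℝ (Fin n) → EuclideanSpace ℝ (Fin n))
    (hgrad : ∀ z, HasGradientAt f (f' z) z)
    (hLip : ∀ z w, ‖f' z - f' w‖ ≤ L * ‖z - w‖)
    (hsc : ∀ z w, f w ≥ f z + ⟪f' z, w - z⟫ + μ / 2 * ‖w - z‖ ^ 2)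
    (xstar : EuclideanSpace ℝ (Fin n)) (hmin : ∀ z, f xstar ≤ f z)
    (s : ℝ) (hs : s = 1 / L)
    (x v : ℕ → EuclideanSpace ℝ (Fin n))
    (hv0 : v 0 = -((2 * Real.sqrt s / (1 + Real.sqrt (μ * s))) • f' (x 0)))
    (hx : ∀ k : ℕ, x (k + 1) - x k = Real.sqrt s • v (k + 1))
    (hv : ∀ k : ℕ, v (k + 1) - v k = -((2 * Real.sqrt (μ * s)) • v (k + 1))
      - (Real.sqrt s * (1 + Real.sqrt (μ * s))) • f' (x (k + 1)))
    : ∀ k : ℕ, f (x k) - f xstar ≤ 15 * L * ‖x 0 - xstar‖ ^ 2 / (4 * (1 + (1 / 4) * Real.sqrt (μ / L)) ^ k) := by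
  have hL : 0 < L := lt_of_lt_of_le hμ hμL
  have hspos : 0 < s := by rw [hs]; positivity
  set m := Real.sqrt μ with hmdef
  set b := Real.sqrt s with hbdef
  have hm : 0 < m := Real.sqrt_pos.mpr hμ
  have hb : 0 < b := Real.sqrt_pos.mpr hspos
  have hm2 : m^2 = μ := Real.sq_sqrt hμ.le
  have hb2 : b^2 = s := Real.sq_sqrt hspos.le
  have hA : Real.sqrt (μ*s) = m*b := by
    rw [hmdef, hbdef]; exact Real.sqrt_mul hμ.le s
  rw [hA] at hv0
  -- gradient vanishes at the minimizer
  have hgs : f' xstar = 0 := by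
    have h1 : IsLocalMin f xstar := Filter.Eventually.of_forall hmin
    have h2 := h1.hasFDerivAt_eq_zero (hgrad xstar).hasFDerivAt
    simpa using h2
  set E : ℕ → ℝ := fun k => (1+m*b)*(f (x k) - f xstar) + 1/4*‖v k‖^2
    + 1/4*‖v k + (2*m)•(x k - xstar)‖^2 with hEdef
  have hstep : ∀ k, (1+(m*b)/4) * E (k+1) ≤ E k := by
    intro k
    have hvk := hv k; rw [hA] at hvk
    simp only [hEdef]
    exact step_lemma μ m b hm hb hm2 f f' xstar hmin hsc (x k) (x (k+1)) (v k) (v (k+1))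
      (hx k) hvk
  have hone : (0:ℝ) < 1+(m*b)/4 := by positivity
  have hdecay : ∀ k, E k ≤ E 0 / (1+(m*b)/4)^k := by
    intro k; induction k with
    | zero => simp
    | succ k ih =>
      have h1 := hstep k
      have h2 : E (k+1) ≤ E k / (1+(m*b)/4) := by
        rw [le_div_iff₀ hone]; linarith
      have h3 : E k / (1+(m*b)/4) ≤ (E 0 / (1+(m*b)/4)^k) / (1+(m*b)/4) := by gcongr
      have h4 : (E 0 / (1+(m*b)/4)^k) / (1+(m*b)/4) = E 0 / (1+(m*b)/4)^(k+1) := by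
        rw [div_div, pow_succ]
      linarith
  -- bound on the initial energy
  have hg0 : ‖f' (x 0)‖ ≤ L * ‖x 0 - xstar‖ := by
    have h := hLip (x 0) xstar; rw [hgs, sub_zero] at h; exact h
  have hn0 : ‖v 0‖^2 = (2*b/(1+m*b))^2*‖f' (x 0)‖^2 := by
    rw [hv0, norm_neg, norm_smul, mul_pow, Real.norm_eq_abs, sq_abs]
  have hW0 : ‖v 0 + (2*m)•(x 0 - xstar)‖^2 = (2*b/(1+m*b))^2*‖f' (x 0)‖^2
      - 2*(2*b/(1+m*b))*(2*m)*⟪f' (x 0), x 0 - xstar⟫ + 4*m^2*‖x 0 - xstar‖^2 := by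
    rw [show v 0 + (2*m)•(x 0 - xstar)
        = (-(2*b/(1+m*b)))•(f' (x 0)) + (2*m)•(x 0 - xstar) from by rw [hv0]; module, expand2]
    ring
  have hf0 : f (x 0) - f xstar ≤ ⟪f' (x 0), x 0 - xstar⟫ - m^2/2*‖x 0 - xstar‖^2 := by
    have h := hsc (x 0) xstar
    rw [← hm2] at h
    have h1 : ⟪f' (x 0), xstar - x 0⟫ = -⟪f' (x 0), x 0 - xstar⟫ := by
      rw [show xstar - x 0 = -(x 0 - xstar) from by abel, inner_neg_right]
    have h2 : ‖xstar - x 0‖^2 = ‖x 0 - xstar‖^2 := by rw [norm_sub_rev]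
    rw [h1, h2] at h; linarith
  have hip : ⟪f' (x 0), x 0 - xstar⟫ ≤ L*‖x 0 - xstar‖^2 := by
    calc ⟪f' (x 0), x 0 - xstar⟫ ≤ ‖f' (x 0)‖*‖x 0 - xstar‖ := real_inner_le_norm _ _
    _ ≤ (L*‖x 0 - xstar‖)*‖x 0 - xstar‖ := mul_le_mul_of_nonneg_right hg0 (norm_nonneg _)
    _ = L*‖x 0 - xstar‖^2 := by ring
  have hG2 : ‖f' (x 0)‖^2 ≤ L^2*‖x 0 - xstar‖^2 := by
    nlinarith [norm_nonneg (f' (x 0)), norm_nonneg (x 0 - xstar), hg0]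
  have ha1 : m*b ≤ 1 := by
    have h1 : (m*b)^2 = μ*s := by rw [mul_pow, hm2, hb2]
    have h2 : μ*s ≤ 1 := by rw [hs]; rw [mul_one_div]; exact div_le_one_of_le₀ hμL hL.le
    nlinarith [mul_nonneg hm.le hb.le]
  have hb2inv : b^2 = 1/L := by rw [hb2, hs]
  have hq : 2*b^2*(L^2*‖x 0 - xstar‖^2) = 2*(L*‖x 0 - xstar‖^2) := by
    rw [hb2inv]; field_simp
  have hr2 : (0:ℝ) ≤ ‖x 0 - xstar‖^2 := by positivity
  have hE0 : E 0 ≤ 15/4*L*‖x 0 - xstar‖^2 := by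
    have hEv : E 0 = ((1+m*b)^3*(f (x 0) - f xstar) + 2*b^2*‖f' (x 0)‖^2
        - 2*(m*b)*(1+m*b)*⟪f' (x 0), x 0 - xstar⟫
        + (1+m*b)^2*m^2*‖x 0 - xstar‖^2)/(1+m*b)^2 := by
      simp only [hEdef]
      rw [hn0, hW0]
      field_simp
      ring
    rw [hEv, div_le_iff₀ (by positivity)]
    have t1 : (1+m*b)^3*(f (x 0) - f xstar)
        ≤ (1+m*b)^3*(⟪f' (x 0), x 0 - xstar⟫ - m^2/2*‖x 0 - xstar‖^2) :=
      mul_le_mul_of_nonneg_left hf0 (by positivity)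
    have t2 : (1+m*b)*(1+(m*b)^2)*⟪f' (x 0), x 0 - xstar⟫
        ≤ (1+m*b)*(1+(m*b)^2)*(L*‖x 0 - xstar‖^2) :=
      mul_le_mul_of_nonneg_left hip (by positivity)
    have t3 : 2*b^2*‖f' (x 0)‖^2 ≤ 2*b^2*(L^2*‖x 0 - xstar‖^2) :=
      mul_le_mul_of_nonneg_left hG2 (by positivity)
    have hMT : m^2*‖x 0 - xstar‖^2 ≤ L*‖x 0 - xstar‖^2 := by
      apply mul_le_mul_of_nonneg_right _ hr2
      rw [hm2]; exact hμL
    have H1 : 0 ≤ (1+m*b)^2*(1-m*b)*(L*‖x 0 - xstar‖^2 - m^2*‖x 0 - xstar‖^2) := by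
      apply mul_nonneg (mul_nonneg (by positivity) (by linarith)) (by linarith)
    have H2 : 0 ≤ (m*b)*(L*‖x 0 - xstar‖^2) := by positivity
    have H3 : 0 ≤ (m*b)^2*(L*‖x 0 - xstar‖^2) := by positivity
    have H4 : 0 ≤ (m*b)^2*(1-m*b)*(L*‖x 0 - xstar‖^2) := by
      apply mul_nonneg (mul_nonneg (by positivity) (by linarith)) (by positivity)
    have H0 : 0 ≤ L*‖x 0 - xstar‖^2 := by positivity
    linarith [t1, t2, t3, hq, H0, H1, H2, H3, H4]
  -- conclusion
  intro k
  have h5 : f (x k) - f xstar ≤ E k := by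
    have h2 : 0 ≤ ‖v k‖^2 := by positivity
    have h3 : 0 ≤ ‖v k + (2*m)•(x k - xstar)‖^2 := by positivity
    have h4 : 0 ≤ f (x k) - f xstar := by linarith [hmin (x k)]
    have h6 := mul_nonneg (mul_nonneg hm.le hb.le) h4
    simp only [hEdef]
    linarith
  have h6 : E k ≤ E 0 / (1+(m*b)/4)^k := hdecay k
  have hpow : (0:ℝ) < (1+(m*b)/4)^k := by positivity
  have h7 : E 0/(1+(m*b)/4)^k ≤ (15/4*L*‖x 0 - xstar‖^2)/(1+(m*b)/4)^k := by gcongr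
  have hsq : Real.sqrt (μ/L) = m*b := by
    rw [show μ/L = μ*s from by rw [hs]; ring, hA]
  rw [hsq]
  have h8 : 15*L*‖x 0 - xstar‖^2/(4*(1+1/4*(m*b))^k)
      = (15/4*L*‖x 0 - xstar‖^2)/(1+(m*b)/4)^k := by
    rw [show (1:ℝ)+1/4*(m*b) = 1+(m*b)/4 from by ring, ← div_div]
    congr 1
    ring
  rw [h8]
  exact le_trans h5 (le_trans h6 h7)
end

section
/- Let f be convex with L-Lipschitz gradient on ℝⁿ, with minimizer x⋆, and let 0 < s ≤ 1/(3L). Then the iterates of the symplectic Euler scheme for the modified high-resolution NAG-C ODE satisfy, for every k ≥ 0, f(x_k) − f(x⋆) ≤ 119‖x₀ − x⋆‖² / (s(k+1)²) and min_{0 ≤ i ≤ k} ‖∇f(x_i)‖² ≤ 8568‖x₀ − x⋆‖² / (s²(k+1)³). -/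
open scoped RealInnerProductSpace

section aux
open Set
variable {E : Type*} [NormedAddCommGroup E] [InnerProductSpace ℝ E] [CompleteSpace E]
variable {L : ℝ} {f : E → ℝ} {f' : E → E}

lemma line_hasDerivAt (hgrad : ∀ z, HasGradientAt f (f' z) z) (a b : E) (t : ℝ) :
    HasDerivAt (fun τ : ℝ => f (a + τ • (b - a))) ⟪f' (a + t • (b - a)), b - a⟫ t := by
  have hc : HasDerivAt (fun τ : ℝ => a + τ • (b - a)) (b - a) t := by
    simpa using ((hasDerivAt_id t).smul_const (b - a)).const_add a
  have hF := (hasGradientAt_iff_hasFDerivAt.mp (hgrad (a + t • (b - a))))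
  have h2 := hF.comp_hasDerivAt t hc
  have h3 : HasDerivAt (f ∘ fun τ : ℝ => a + τ • (b - a)) ⟪f' (a + t • (b - a)), b - a⟫ t := by
    simpa [InnerProductSpace.toDual_apply_apply] using h2
  exact h3

lemma grad_conv (hgrad : ∀ z, HasGradientAt f (f' z) z)
    (hconv : ConvexOn ℝ Set.univ f) (a b : E) :
    f a + ⟪f' a, b - a⟫ ≤ f b := by
  have h1 : ConvexOn ℝ Set.univ (f ∘ (AffineMap.lineMap a b : ℝ →ᵃ[ℝ] E)) := by
    simpa using hconv.comp_affineMap (AffineMap.lineMap a b : ℝ →ᵃ[ℝ] E)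
  have h2 : (f ∘ (AffineMap.lineMap a b : ℝ →ᵃ[ℝ] E)) = fun τ : ℝ => f (a + τ • (b - a)) := by
    funext τ
    simp [AffineMap.lineMap_apply_module, Function.comp]
    congr 1
    module
  rw [h2] at h1
  have hd := line_hasDerivAt hgrad a b 0
  have h3 := h1.le_slope_of_hasDerivAt (mem_univ (0:ℝ)) (mem_univ (1:ℝ)) one_pos (by simpa using hd)
  rw [slope_def_field] at h3
  simp at h3
  linarith [h3]

lemma descent (hL : 0 < L) (hgrad : ∀ z, HasGradientAt f (f' z) z)
    (hLip : ∀ z w, ‖f' z - f' w‖ ≤ L * ‖z - w‖) (a b : E) :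
    f b ≤ f a + ⟪f' a, b - a⟫ + L / 2 * ‖b - a‖ ^ 2 := by
  set d := b - a with hd
  set ψ : ℝ → ℝ := fun τ => f (a + τ • d) - τ * ⟪f' a, d⟫ - L / 2 * τ ^ 2 * ‖d‖ ^ 2 with hψ
  have hψd : ∀ τ : ℝ, HasDerivAt ψ (⟪f' (a + τ • d), d⟫ - ⟪f' a, d⟫ - L * τ * ‖d‖ ^ 2) τ := by
    intro τ
    have h1 := line_hasDerivAt hgrad a b τ
    have h2 : HasDerivAt (fun τ : ℝ => τ * ⟪f' a, d⟫) ⟪f' a, d⟫ τ := by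
      simpa using (hasDerivAt_id τ).mul_const (⟪f' a, d⟫ : ℝ)
    have h3 : HasDerivAt (fun τ : ℝ => L / 2 * τ ^ 2 * ‖d‖ ^ 2) (L * τ * ‖d‖ ^ 2) τ := by
      have := ((hasDerivAt_pow 2 τ).const_mul (L / 2)).mul_const (‖d‖ ^ 2)
      exact this.congr_deriv (by ring)
    have := (h1.sub h2).sub h3
    exact this
  have hmono : AntitoneOn ψ (Icc (0:ℝ) 1) := by
    apply antitoneOn_of_deriv_nonpos (convex_Icc 0 1)
    · exact (Differentiable.continuous (fun τ => (hψd τ).differentiableAt)).continuousOn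
    · exact fun τ _ => ((hψd τ).differentiableAt).differentiableWithinAt
    · intro τ hτ
      rw [interior_Icc] at hτ
      rw [(hψd τ).deriv]
      have hi : ⟪f' (a + τ • d) - f' a, d⟫ ≤ ‖f' (a + τ • d) - f' a‖ * ‖d‖ :=
        real_inner_le_norm _ _
      have hlip := hLip (a + τ • d) a
      have hnn : ‖a + τ • d - a‖ = τ * ‖d‖ := by
        rw [add_sub_cancel_left, norm_smul, Real.norm_eq_abs, abs_of_pos hτ.1]
      rw [hnn] at hlip
      rw [inner_sub_left] at hi
      nlinarith [norm_nonneg d, norm_nonneg (f' (a + τ • d) - f' a), hτ.1.le]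
  have h01 := hmono (left_mem_Icc.mpr zero_le_one) (right_mem_Icc.mpr zero_le_one) zero_le_one
  have hψ0 : ψ 0 = f a := by simp [hψ]
  have hψ1 : ψ 1 = f b - ⟪f' a, d⟫ - L / 2 * ‖d‖ ^ 2 := by
    have hb : a + d = b := by rw [hd]; abel
    simp [hψ, hb]
  rw [hψ0, hψ1] at h01
  linarith

lemma coco (hL : 0 < L) (hgrad : ∀ z, HasGradientAt f (f' z) z)
    (hconv : ConvexOn ℝ Set.univ f)
    (hLip : ∀ z w, ‖f' z - f' w‖ ≤ L * ‖z - w‖) (a b : E) :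
    f a + ⟪f' a, b - a⟫ + 1 / (2 * L) * ‖f' b - f' a‖ ^ 2 ≤ f b := by
  set c := b - (1 / L) • (f' b - f' a) with hc
  have h1 := descent hL hgrad hLip b c
  have h2 := grad_conv hgrad hconv a c
  have e1 : c - b = -((1 / L) • (f' b - f' a)) := by rw [hc]; abel
  have e2 : c - a = b - a - (1 / L) • (f' b - f' a) := by rw [hc]; abel
  have hib : ⟪f' b, c - b⟫ = -(1 / L * ⟪f' b, f' b - f' a⟫) := by
    rw [e1, inner_neg_right, inner_smul_right]
  have hia : ⟪f' a, c - a⟫ = ⟪f' a, b - a⟫ - 1 / L * ⟪f' a, f' b - f' a⟫ := by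
    rw [e2, inner_sub_right, inner_smul_right]
  have hnc : ‖c - b‖ ^ 2 = (1 / L) ^ 2 * ‖f' b - f' a‖ ^ 2 := by
    rw [e1, norm_neg, norm_smul, Real.norm_eq_abs, mul_pow, sq_abs]
  rw [hib, hnc] at h1
  rw [hia] at h2
  have hdd : 1 / L * ⟪f' b, f' b - f' a⟫ - 1 / L * ⟪f' a, f' b - f' a⟫
      = 1 / L * ‖f' b - f' a‖ ^ 2 := by
    rw [← mul_sub, ← inner_sub_left, real_inner_self_eq_norm_sq]
  have e3 : L / 2 * ((1 / L) ^ 2 * ‖f' b - f' a‖ ^ 2) = 1 / (2 * L) * ‖f' b - f' a‖ ^ 2 := by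
    field_simp
  have e4 : 1 / L * ‖f' b - f' a‖ ^ 2
      = 1 / (2 * L) * ‖f' b - f' a‖ ^ 2 + 1 / (2 * L) * ‖f' b - f' a‖ ^ 2 := by
    have : L ≠ 0 := ne_of_gt hL
    field_simp
    ring
  linarith
end aux

set_option maxHeartbeats 1000000 in
theorem stmt6
    {n : ℕ} (L : ℝ) (hL : 0 < L)
    (f : EuclideanSpace ℝ (Fin n) → ℝ)
    (f' : EuclideanSpace ℝ (Fin n) → EuclideanSpace ℝ (Fin n))
    (hgrad : ∀ z, HasGradientAt f (f' z) z)
    (hconv : ConvexOn ℝ Set.univ f)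
    (hLip : ∀ z w, ‖f' z - f' w‖ ≤ L * ‖z - w‖)
    (xstar : EuclideanSpace ℝ (Fin n)) (hmin : ∀ z, f xstar ≤ f z)
    (s : ℝ) (hs0 : 0 < s) (hs : s ≤ 1 / (3 * L))
    (x v : ℕ → EuclideanSpace ℝ (Fin n))
    (hv0 : v 0 = -(Real.sqrt s • f' (x 0)))
    (hx : ∀ k : ℕ, x (k + 1) - x k = Real.sqrt s • v k)
    (hv : ∀ k : ℕ, v (k + 1) - v k = -((3 / ((k : ℝ) + 1)) • v (k + 1))
      - Real.sqrt s • (f' (x (k + 1)) - f' (x k))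
      - (Real.sqrt s * (((k : ℝ) + 4) / ((k : ℝ) + 1))) • f' (x (k + 1)))
    : ∀ k : ℕ, f (x k) - f xstar ≤ 119 * ‖x 0 - xstar‖ ^ 2 / (s * ((k : ℝ) + 1) ^ 2) ∧
      ∃ i ≤ k, ‖f' (x i)‖ ^ 2 ≤ 8568 * ‖x 0 - xstar‖ ^ 2 / (s ^ 2 * ((k : ℝ) + 1) ^ 3) := by
  have hcv : ∀ a b : EuclideanSpace ℝ (Fin n), f a + ⟪f' a, b - a⟫ ≤ f b :=
    grad_conv hgrad hconv
  have hdes : ∀ a b : EuclideanSpace ℝ (Fin n),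
      f b ≤ f a + ⟪f' a, b - a⟫ + L / 2 * ‖b - a‖ ^ 2 := descent hL hgrad hLip
  have hco : ∀ a b : EuclideanSpace ℝ (Fin n),
      f a + ⟪f' a, b - a⟫ + 1 / (2 * L) * ‖f' b - f' a‖ ^ 2 ≤ f b := coco hL hgrad hconv hLip
  have hnn : ∀ z, 0 ≤ f z - f xstar := fun z => sub_nonneg.mpr (hmin z)
  have hR2nn : (0:ℝ) ≤ ‖x 0 - xstar‖ ^ 2 := by positivity
  have hsL : s * L ≤ 1 / 3 := by
    have h' := mul_le_mul_of_nonneg_right hs hL.le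
    have h'' : 1/(3*L)*L = 1/3 := by field_simp
    linarith
  have hstar : f' xstar = 0 := by
    have hlm : IsLocalMin f xstar := Filter.Eventually.of_forall hmin
    have hfd := hasGradientAt_iff_hasFDerivAt.mp (hgrad xstar)
    have h0 := hlm.hasFDerivAt_eq_zero hfd
    exact (InnerProductSpace.toDual ℝ (EuclideanSpace ℝ (Fin n))).map_eq_zero_iff.mp h0
  set r := Real.sqrt s with hrdef
  have hr2 : r * r = s := Real.mul_self_sqrt hs0.le
  obtain ⟨t, ht⟩ : ∃ t : ℕ → ℝ, ∀ k, t k = ((k : ℝ) + 2) / 2 :=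
    ⟨fun k => ((k : ℝ) + 2) / 2, fun _ => rfl⟩
  have ht1 : ∀ k, 1 ≤ t k := by
    intro k; rw [ht k]
    have : (0:ℝ) ≤ (k:ℝ) := Nat.cast_nonneg k
    linarith
  have ht0 : ∀ k, 0 < t k := fun k => lt_of_lt_of_le one_pos (ht1 k)
  obtain ⟨X, hX0, hXs⟩ : ∃ X : ℕ → EuclideanSpace ℝ (Fin n),
      X 0 = x 0 ∧ ∀ j : ℕ, X (j + 1) = x j - s • f' (x j) :=
    ⟨fun k => Nat.casesOn k (x 0) (fun j => x j - s • f' (x j)), rfl, fun _ => rfl⟩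
  obtain ⟨u, hu⟩ : ∃ u : ℕ → EuclideanSpace ℝ (Fin n),
      ∀ k, u k = t k • (x k - xstar) - (t k - 1) • (X k - xstar) :=
    ⟨fun k => t k • (x k - xstar) - (t k - 1) • (X k - xstar), fun _ => rfl⟩
  have hx1 : x 1 = x 0 - s • f' (x 0) := by
    have h := hx 0
    rw [hv0, smul_neg, smul_smul, hr2] at h
    have h2 : x 1 = x 0 + (x 1 - x 0) := by abel
    rw [h2, h]; abel
  have hM : ∀ k : ℕ, t (k+1) • (x (k+1) - X (k+1)) = (t k - 1) • (X (k+1) - X k) := by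
    intro k
    induction k with
    | zero =>
      rw [hXs 0, hx1]
      have h0 : t 0 - 1 = 0 := by rw [ht 0]; norm_num
      rw [h0, zero_smul, sub_self, smul_zero]
    | succ j _ =>
      have hj : ((j : ℝ) + 1) ≠ 0 := by positivity
      have h1 := congrArg (fun y : EuclideanSpace ℝ (Fin n) => ((j:ℝ)+1) • y) (hv j)
      simp only [smul_sub, smul_neg, smul_smul] at h1
      rw [show ((j:ℝ)+1) * (3/((j:ℝ)+1)) = 3 by field_simp,
          show ((j:ℝ)+1) * (r * (((j:ℝ)+4)/((j:ℝ)+1))) = r * ((j:ℝ)+4) by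
            field_simp] at h1
      have hd2 := hx (j+1)
      have hd1 := hx j
      rw [hXs (j+1), hXs j]
      have htt : t (j+1+1) = ((j:ℝ)+4)/2 := by rw [ht (j+1+1)]; push_cast; ring
      have hts : t (j+1) - 1 = ((j:ℝ)+1)/2 := by rw [ht (j+1)]; push_cast; ring
      rw [htt, hts]
      have hsr : s = r * r := hr2.symm
      rw [hsr]
      linear_combination (norm := module) (((j:ℝ)+4)/2) • hd2 - (((j:ℝ)+1)/2) • hd1 + (r/2) • h1
  have huu : ∀ k : ℕ, u (k+1) = u k - (s * t k) • f' (x k) := by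
    intro k
    rw [hu (k+1), hu k]
    linear_combination (norm := module) hM k + t k • hXs k
  have huX : ∀ k : ℕ, u (k+1) = t k • (X (k+1) - xstar) - (t k - 1) • (X k - xstar) := by
    intro k
    rw [hu (k+1)]
    linear_combination (norm := module) hM k
  have hukalt : ∀ k : ℕ, u k = (t k - 1) • (x k - X k) + (x k - xstar) := by
    intro k
    rw [hu k]
    module
  obtain ⟨Φ, hΦ⟩ : ∃ Φ : ℕ → ℝ,
      ∀ k, Φ k = s * (t k * (t k - 1)) * (f (X k) - f xstar) + ‖u k‖ ^ 2 / 2 :=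
    ⟨fun k => s * (t k * (t k - 1)) * (f (X k) - f xstar) + ‖u k‖ ^ 2 / 2, fun _ => rfl⟩
  have hstep : ∀ k : ℕ, Φ (k+1) + s^2 * (t k)^2 / 3 * ‖f' (x k)‖^2 ≤ Φ k := by
    intro k
    rw [hΦ (k+1), hΦ k]
    have hAnn : 0 ≤ f (X k) - f xstar := hnn _
    have hCnn : 0 ≤ f (X (k+1)) - f xstar := hnn _
    have hG2nn : 0 ≤ ‖f' (x k)‖^2 := by positivity
    have f1 : f (X (k+1)) - f xstar ≤ (f (x k) - f xstar) - s * ‖f' (x k)‖^2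
        + L/2 * (s^2 * ‖f' (x k)‖^2) := by
      have h := hdes (x k) (X (k+1))
      have e : X (k+1) - x k = -(s • f' (x k)) := by rw [hXs k]; abel
      rw [e, inner_neg_right, real_inner_smul_right, real_inner_self_eq_norm_sq,
        norm_neg, norm_smul, Real.norm_eq_abs, mul_pow, sq_abs] at h
      linarith [h]
    have f2 : f (x k) - f xstar ≤ (f (X k) - f xstar) + ⟪f' (x k), x k - X k⟫ := by
      have h := hcv (x k) (X k)
      have e : ⟪f' (x k), X k - x k⟫ = -⟪f' (x k), x k - X k⟫ := by
        rw [← inner_neg_right]; congr 1; abel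
      rw [e] at h
      linarith [h]
    have f3 : f (x k) - f xstar ≤ ⟪f' (x k), x k - xstar⟫ - 3*s/2 * ‖f' (x k)‖^2 := by
      have h := hco (x k) xstar
      rw [hstar] at h
      have e : ⟪f' (x k), xstar - x k⟫ = -⟪f' (x k), x k - xstar⟫ := by
        rw [← inner_neg_right]; congr 1; abel
      have e2 : ‖(0:EuclideanSpace ℝ (Fin n)) - f' (x k)‖^2 = ‖f' (x k)‖^2 := by
        rw [zero_sub, norm_neg]
      rw [e, e2] at h
      have h2L : 3*s/2 ≤ 1/(2*L) := by
        rw [div_le_div_iff₀ (by norm_num) (by positivity)]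
        linarith only [hsL]
      have h3 := mul_le_mul_of_nonneg_right h2L hG2nn
      linarith [h, h3]
    have f4 : ⟪f' (x k), u k⟫ = (t k - 1) * ⟪f' (x k), x k - X k⟫ + ⟪f' (x k), x k - xstar⟫ := by
      rw [hukalt k, inner_add_right, real_inner_smul_right]
    have f5 : ‖u (k+1)‖^2 = ‖u k‖^2 - 2*(s * t k)*⟪f' (x k), u k⟫ + (s * t k)^2 * ‖f' (x k)‖^2 := by
      rw [huu k, @norm_sub_sq_real, real_inner_smul_right, norm_smul, Real.norm_eq_abs,
        mul_pow, sq_abs, real_inner_comm (u k) (f' (x k))]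
      ring
    have hmulT : t (k+1) * (t (k+1) - 1) ≤ (t k)^2 := by
      rw [ht (k+1), ht k]; push_cast; nlinarith [sq_nonneg ((k:ℝ))]
    have htknn : 0 ≤ t k := (ht0 k).le
    have htk1nn : 0 ≤ t k - 1 := by linarith [ht1 k]
    have hc1 := mul_le_mul_of_nonneg_left f2 htk1nn
    have hstepc : t k * (f (x k) - f xstar) ≤ (t k - 1) * (f (X k) - f xstar)
        + ⟪f' (x k), u k⟫ - 3*s/2 * ‖f' (x k)‖^2 := by
      rw [f4]
      linarith only [hc1, f3]
    have H1 := mul_le_mul_of_nonneg_left hmulT (mul_nonneg hs0.le hCnn)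
    have hst2 : (0:ℝ) ≤ s * (t k)^2 := by positivity
    have H2 := mul_le_mul_of_nonneg_left f1 hst2
    have hstk : (0:ℝ) ≤ s * t k := by positivity
    have H3 := mul_le_mul_of_nonneg_left hstepc hstk
    have H4 : (0:ℝ) ≤ s^2 * t k * ‖f' (x k)‖^2 := by positivity
    have H5 : (0:ℝ) ≤ s^2 * (t k)^2 * ‖f' (x k)‖^2 := by positivity
    have hLs2 : L/2 * (s^2*‖f' (x k)‖^2) * (s * (t k)^2) ≤ s^2 * (t k)^2 /6 * ‖f' (x k)‖^2 := by
      have hh := mul_le_mul_of_nonneg_right hsL H5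
      nlinarith [hh]
    linarith only [H1, H2, H3, f5, H4, hLs2]
  have hΦ0 : Φ 0 = ‖x 0 - xstar‖^2 / 2 := by
    rw [hΦ 0]
    have h1 : t 0 = 1 := by rw [ht 0]; norm_num
    have h2 : u 0 = x 0 - xstar := by
      rw [hu 0, h1, hX0]
      simp
    rw [h1, h2]
    ring
  have hΦnn : ∀ k, 0 ≤ Φ k := by
    intro k
    rw [hΦ k]
    have h0 := hnn (X k)
    have h1 := ht1 k
    have h2 : 0 ≤ s * (t k * (t k - 1)) * (f (X k) - f xstar) := by
      apply mul_nonneg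
      apply mul_nonneg hs0.le
      nlinarith [ht1 k]
      exact hnn (X k)
    positivity
  have hΦle : ∀ k, Φ k ≤ ‖x 0 - xstar‖^2 / 2 := by
    intro k
    induction k with
    | zero => exact le_of_eq hΦ0
    | succ j ih =>
      have h := hstep j
      have h2 : (0:ℝ) ≤ s^2 * (t j)^2 / 3 * ‖f' (x j)‖^2 := by positivity
      linarith only [h, ih, h2]
  have hsum : ∀ k : ℕ, Φ (k+1) + (∑ i ∈ Finset.range (k+1), s^2*(t i)^2/3 * ‖f' (x i)‖^2)
      ≤ ‖x 0 - xstar‖^2 / 2 := by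
    intro k
    induction k with
    | zero =>
      rw [Finset.sum_range_one]
      have h := hstep 0
      rw [hΦ0] at h
      linarith only [h]
    | succ j ih =>
      rw [Finset.sum_range_succ]
      have h := hstep (j+1)
      linarith only [h, ih]
  have hub2 : ∀ k, ‖u k‖^2 ≤ ‖x 0 - xstar‖^2 := by
    intro k
    have h1 := hΦle k
    rw [hΦ k] at h1
    have h2 : 0 ≤ s * (t k * (t k - 1)) * (f (X k) - f xstar) := by
      apply mul_nonneg
      apply mul_nonneg hs0.le
      nlinarith [ht1 k]
      exact hnn (X k)
    linarith only [h1, h2]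
  have hub : ∀ k, ‖u k‖ ≤ ‖x 0 - xstar‖ := by
    intro k
    have h := hub2 k
    nlinarith [norm_nonneg (u k), norm_nonneg (x 0 - xstar)]
  have hXb : ∀ k, ‖X k - xstar‖ ≤ ‖x 0 - xstar‖ := by
    intro k
    induction k with
    | zero => rw [hX0]
    | succ j ih =>
      have h := huX j
      have h2 : t j • (X (j+1) - xstar) = u (j+1) + (t j - 1) • (X j - xstar) := by
        linear_combination (norm := module) -h
      have h3 : ‖t j • (X (j+1) - xstar)‖ = t j * ‖X (j+1) - xstar‖ := by
        rw [norm_smul, Real.norm_eq_abs, abs_of_pos (ht0 j)]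
      have h4 : ‖u (j+1) + (t j - 1) • (X j - xstar)‖
          ≤ ‖u (j+1)‖ + (t j - 1) * ‖X j - xstar‖ := by
        calc ‖u (j+1) + (t j - 1) • (X j - xstar)‖
            ≤ ‖u (j+1)‖ + ‖(t j - 1) • (X j - xstar)‖ := norm_add_le _ _
          _ = ‖u (j+1)‖ + (t j - 1) * ‖X j - xstar‖ := by
              rw [norm_smul, Real.norm_eq_abs, abs_of_nonneg (by linarith [ht1 j])]
      have h5 : t j * ‖X (j+1) - xstar‖ ≤ ‖x 0 - xstar‖ + (t j - 1) * ‖x 0 - xstar‖ := by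
        rw [← h3, h2]
        have h6 := mul_le_mul_of_nonneg_left ih (by linarith [ht1 j] : (0:ℝ) ≤ t j - 1)
        have h7 := hub (j+1)
        calc ‖u (j+1) + (t j - 1) • (X j - xstar)‖
            ≤ ‖u (j+1)‖ + (t j - 1) * ‖X j - xstar‖ := h4
          _ ≤ ‖x 0 - xstar‖ + (t j - 1) * ‖x 0 - xstar‖ := by linarith only [h6, h7]
      nlinarith [ht0 j, h5]
  have hS : ∀ k : ℕ, ((k:ℝ)+1)^3/12 ≤ ∑ i ∈ Finset.range (k+1), (t i)^2 := by
    intro k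
    induction k with
    | zero =>
      rw [Finset.sum_range_one, ht 0]
      norm_num
    | succ j ih =>
      rw [Finset.sum_range_succ]
      have he : t (j+1) = ((j:ℝ)+3)/2 := by rw [ht (j+1)]; push_cast; ring
      rw [he]
      push_cast
      nlinarith [ih, Nat.cast_nonneg (α := ℝ) j, sq_nonneg ((j:ℝ))]
  intro k
  constructor
  · -- function value bound
    have hkpos : (0:ℝ) < s * ((k:ℝ)+1)^2 := by positivity
    rw [le_div_iff₀ hkpos]
    match k with
    | 0 =>
      have h := hdes xstar (x 0)
      rw [hstar] at h
      simp only [inner_zero_left] at h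
      have hd0 : f (x 0) - f xstar ≤ L/2 * ‖x 0 - xstar‖^2 := by linarith only [h]
      have hh1 := mul_le_mul_of_nonneg_right hd0 hs0.le
      have hh2 := mul_le_mul_of_nonneg_right hsL hR2nn
      push_cast
      linarith only [hh1, hh2, hR2nn]
    | (j+1) =>
      have htkv : t (j+1) = ((j:ℝ)+3)/2 := by rw [ht (j+1)]; push_cast; ring
      have hAnn : 0 ≤ f (X (j+1)) - f xstar := hnn _
      have hj : (0:ℝ) ≤ (j:ℝ) := Nat.cast_nonneg j
      -- P1
      have P1 : s * ((((j:ℝ)+3)/2) * ((((j:ℝ)+3)/2) - 1)) * (f (X (j+1)) - f xstar)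
          ≤ ‖x 0 - xstar‖^2/2 := by
        have h1 := hΦle (j+1)
        rw [hΦ (j+1), htkv] at h1
        have h2 : (0:ℝ) ≤ ‖u (j+1)‖^2/2 := by positivity
        linarith only [h1, h2]
      -- P2
      have P2 : f (x (j+1)) - f xstar ≤ (f (X (j+1)) - f xstar)
          + ⟪f' (X (j+1)), x (j+1) - X (j+1)⟫ + L/2 * ‖x (j+1) - X (j+1)‖^2 := by
        have h := hdes (X (j+1)) (x (j+1))
        linarith only [h]
      -- P4
      have P4 : ‖f' (X (j+1))‖^2 ≤ 2*L*(f (X (j+1)) - f xstar) := by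
        have h := hco xstar (X (j+1))
        rw [hstar] at h
        simp only [inner_zero_left, sub_zero] at h
        have hL2 : (0:ℝ) < 2*L := by positivity
        have := mul_le_mul_of_nonneg_left (by linarith only [h] :
          1/(2*L) * ‖f' (X (j+1))‖^2 ≤ f (X (j+1)) - f xstar) hL2.le
        have he : 2*L*(1/(2*L) * ‖f' (X (j+1))‖^2) = ‖f' (X (j+1))‖^2 := by
          field_simp
        linarith only [this, he.symm.le, he.le]
      -- P5
      have P5 : t (j+1) * ‖x (j+1) - X (j+1)‖ ≤ 2 * ‖x 0 - xstar‖ := by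
        have h1 : t (j+1) • (x (j+1) - X (j+1)) = u (j+1) - (X (j+1) - xstar) := by
          have h := hukalt (j+1)
          linear_combination (norm := module) -h
        have h2 : ‖t (j+1) • (x (j+1) - X (j+1))‖ = t (j+1) * ‖x (j+1) - X (j+1)‖ := by
          rw [norm_smul, Real.norm_eq_abs, abs_of_pos (ht0 (j+1))]
        rw [← h2, h1]
        calc ‖u (j+1) - (X (j+1) - xstar)‖ ≤ ‖u (j+1)‖ + ‖X (j+1) - xstar‖ :=
            norm_sub_le _ _
          _ ≤ 2 * ‖x 0 - xstar‖ := by linarith only [hub (j+1), hXb (j+1)]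
      have P5' : (((j:ℝ)+3)/2)^2 * ‖x (j+1) - X (j+1)‖^2 ≤ 4 * ‖x 0 - xstar‖^2 := by
        rw [← htkv]
        nlinarith [P5, mul_nonneg (ht0 (j+1)).le (norm_nonneg (x (j+1) - X (j+1))),
          norm_nonneg (x 0 - xstar)]
      -- P3 Young
      have P3 : 3*s*⟪f' (X (j+1)), x (j+1) - X (j+1)⟫
          ≤ 9*s^2/4 * ‖f' (X (j+1))‖^2 + ‖x (j+1) - X (j+1)‖^2 := by
        have h1 := real_inner_le_norm (f' (X (j+1))) (x (j+1) - X (j+1))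
        have h2 := mul_le_mul_of_nonneg_left h1 (by positivity : (0:ℝ) ≤ 3*s)
        have h3 := sq_nonneg (3*s/2 * ‖f' (X (j+1))‖ - ‖x (j+1) - X (j+1)‖)
        linarith only [h2, h3]
      have hd2nn : (0:ℝ) ≤ ‖x (j+1) - X (j+1)‖^2 := by positivity
      have hG2nn : (0:ℝ) ≤ ‖f' (X (j+1))‖^2 := by positivity
      -- q1
      have q1 : s * (f (X (j+1)) - f xstar) * ((j:ℝ)+2)^2 ≤ 8/3 * ‖x 0 - xstar‖^2 := by
        have hh := mul_nonneg (mul_nonneg hs0.le hAnn)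
          (by positivity : (0:ℝ) ≤ (j:ℝ)^2 + 4*(j:ℝ))
        linarith only [P1, hh]
      -- q2
      have q2 : ‖x (j+1) - X (j+1)‖^2 * ((j:ℝ)+2)^2 ≤ 16 * ‖x 0 - xstar‖^2 := by
        have hh := mul_nonneg hd2nn (by positivity : (0:ℝ) ≤ 2*(j:ℝ)+5)
        linarith only [P5', hh]
      -- q3
      have q3 : s * ⟪f' (X (j+1)), x (j+1) - X (j+1)⟫
          ≤ s*(f (X (j+1)) - f xstar)/2 + ‖x (j+1) - X (j+1)‖^2/3 := by
        have h1 : 9*s^2/4 * ‖f' (X (j+1))‖^2 ≤ 9*s^2/4 * (2*L*(f (X (j+1)) - f xstar)) :=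
          mul_le_mul_of_nonneg_left P4 (by positivity)
        have h2 : 9*s^2/4 * (2*L*(f (X (j+1)) - f xstar)) ≤ 3*s*(f (X (j+1)) - f xstar)/2 := by
          have hh := mul_le_mul_of_nonneg_right hsL (mul_nonneg hs0.le hAnn)
          linarith only [hh]
        linarith only [P3, h1, h2]
      -- q4
      have q4 : s * (L/2 * ‖x (j+1) - X (j+1)‖^2) ≤ ‖x (j+1) - X (j+1)‖^2/6 := by
        have hh := mul_le_mul_of_nonneg_right hsL hd2nn
        linarith only [hh]
      have q5 : (f (x (j+1)) - f xstar) * s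
          ≤ 3/2 * (s*(f (X (j+1)) - f xstar)) + ‖x (j+1) - X (j+1)‖^2/2 := by
        have h := mul_le_mul_of_nonneg_left P2 hs0.le
        linarith only [q3, q4, h]
      have q6 : (f (x (j+1)) - f xstar) * s * ((j:ℝ)+2)^2
          ≤ 3/2 * (s*(f (X (j+1)) - f xstar)*((j:ℝ)+2)^2)
            + ‖x (j+1) - X (j+1)‖^2*((j:ℝ)+2)^2/2 := by
        have hh := mul_le_mul_of_nonneg_right q5 (by positivity : (0:ℝ) ≤ ((j:ℝ)+2)^2)
        linarith only [hh]
      push_cast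
      linarith only [q6, q1, q2, hR2nn]
  · -- gradient bound
    obtain ⟨i, hi_mem, hi_min⟩ := Finset.exists_min_image (Finset.range (k+1))
      (fun i => ‖f' (x i)‖^2) ⟨0, Finset.mem_range.mpr (Nat.succ_pos k)⟩
    refine ⟨i, Nat.lt_succ_iff.mp (Finset.mem_range.mp hi_mem), ?_⟩
    have hmnn : (0:ℝ) ≤ ‖f' (x i)‖^2 := by positivity
    have h1 : ∑ j ∈ Finset.range (k+1), s^2*(t j)^2/3 * ‖f' (x i)‖^2
        ≤ ∑ j ∈ Finset.range (k+1), s^2*(t j)^2/3 * ‖f' (x j)‖^2 := by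
      apply Finset.sum_le_sum
      intro j hj
      exact mul_le_mul_of_nonneg_left (hi_min j hj) (by positivity)
    have h2 : ∑ j ∈ Finset.range (k+1), s^2*(t j)^2/3 * ‖f' (x i)‖^2
        = s^2*‖f' (x i)‖^2/3 * ∑ j ∈ Finset.range (k+1), (t j)^2 := by
      rw [Finset.mul_sum]
      apply Finset.sum_congr rfl
      intro j _
      ring
    have h3 := hsum k
    have h4 := hΦnn (k+1)
    have h5 : s^2*‖f' (x i)‖^2/3 * (((k:ℝ)+1)^3/12) ≤ ‖x 0 - xstar‖^2/2 := by
      have h6 := mul_le_mul_of_nonneg_left (hS k)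
        (by positivity : (0:ℝ) ≤ s^2*‖f' (x i)‖^2/3)
      rw [← h2] at h6
      linarith only [h1, h3, h4, h6]
    have hkpos : (0:ℝ) < s^2 * ((k:ℝ)+1)^3 := by positivity
    rw [le_div_iff₀ hkpos]
    linarith only [h5, hR2nn]
end

section
/- Let 0 < μ ≤ L, let f be μ-strongly convex with L-Lipschitz gradient on ℝⁿ, with minimizer x⋆, and let 0 < s ≤ μ/(100L²). Then the iterates of the explicit Euler scheme for the high-resolution NAG-SC ODE satisfy, for every k ≥ 0, f(x_k) − f(x⋆) ≤ ( (3 − 2√(μs) + μs)/(2 + 4√(μs) + 2μs) · sL + 2μ/L + (1 + √(μs))/2 ) · L‖x₀ − x⋆‖² (1 − √(μs)/8)^k. -/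
open scoped RealInnerProductSpace

set_option maxHeartbeats 1000000 in

lemma key_ineq (σ τ L s μ F F' V G R D W p e c ρ : ℝ)
    (hσ2 : σ ^ 2 = s) (hτ2 : τ ^ 2 = μ) (hσ0 : 0 < σ) (hτ0 : 0 < τ)
    (hL0 : 0 < L) (hμL : μ ≤ L)
    (ha10 : τ * σ ≤ 1 / 10) (hLs : L * s ≤ τ * σ / 10)
    (hF : 0 ≤ F) (hV : 0 ≤ V) (hG : 0 ≤ G) (hR : 0 ≤ R) (hD0 : 0 ≤ D) (hW : 0 ≤ W)
    (hdesc : F' ≤ F + σ * p + L * s / 2 * V)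
    (hsc' : F + μ / 2 * R ≤ ρ)
    (hGF : G ≤ 2 * L * F)
    (hDb : D ≤ L ^ 2 * s * V)
    (he2 : -(σ * e) ≤ L * s * V)
    (hc : 2 * c ≤ D + G)
    (hp : 2 * (σ * p) ≤ L * s * V + G / L)
    (hW3 : W ≤ 3 * (V + 4 * μ * R + s * G)) :
    F' + 1/4 * ((1 - 2*(τ*σ))^2 * V + σ^2 * D + ((1+τ*σ)*σ)^2 * G
        - 2*(1-2*(τ*σ))*σ*e - 2*(1-2*(τ*σ))*(1+τ*σ)*σ*p + 2*(1+τ*σ)*σ^2*c)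
      + 1/4 * (W - 2*((1+τ*σ)*σ)*(p + 2*τ*ρ + σ*G) + ((1+τ*σ)*σ)^2 * G)
      ≤ (1 - τ*σ/8) * (F + 1/4 * V + 1/4 * W) := by
  set a := τ * σ with haa
  clear_value a
  have ha0 : 0 < a := haa ▸ mul_pos hτ0 hσ0
  have hs0 : 0 < s := hσ2 ▸ (pow_pos hσ0 2)
  have hμ0 : 0 < μ := hτ2 ▸ (pow_pos hτ0 2)
  have ha2 : a ^ 2 = μ * s := by rw [haa, mul_pow, hσ2, hτ2]
  have hb0 : (0:ℝ) ≤ L * s := le_of_lt (mul_pos hL0 hs0)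
  -- individual scalar bounds
  have hA : a^2 * (σ*p) ≤ a^2/2 * (L*s*V) + a^2/2 * (G/L) := by
    have := mul_le_mul_of_nonneg_left hp (sq_nonneg a)
    linarith only [this]
  have hB : -((1-2*a)/2 * (σ*e)) ≤ (1-2*a)/2 * (L*s*V) := by
    have h12 : 0 ≤ (1-2*a)/2 := by linarith
    have := mul_le_mul_of_nonneg_left he2 h12
    linarith only [this]
  have hC : s/4 * D ≤ s/4 * (L^2*s*V) := by
    have := mul_le_mul_of_nonneg_left hDb (by linarith only [hs0] : (0:ℝ) ≤ s/4)
    linarith only [this]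
  have hD4 : (1+a)*s/2 * c ≤ (1+a)*s/4 * (L^2*s*V) + (1+a)*s/4 * G := by
    have h1a : (0:ℝ) ≤ (1+a)*s/4 := by nlinarith only [ha0, hs0, mul_pos ha0 hs0]
    have h2 := mul_le_mul_of_nonneg_left hc h1a
    have h3 := mul_le_mul_of_nonneg_left hDb h1a
    linarith only [h2, h3]
  have hE5 : a*(1+a)*F + a*(1+a)*(μ/2)*R ≤ a*(1+a)*ρ := by
    have h1a : (0:ℝ) ≤ a*(1+a) := by nlinarith only [ha0, mul_pos ha0 ha0]
    have := mul_le_mul_of_nonneg_left hsc' h1a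
    linarith only [this]
  have hF6 : a/32 * W ≤ 3*a/32*V + 3*a/8*μ*R + 3*a/32*s*G := by
    have := mul_le_mul_of_nonneg_left hW3 (by linarith only [ha0] : (0:ℝ) ≤ a/32)
    linarith only [this]
  -- coefficient sign facts
  have hV0 : (a/8 - a + a^2 + L*s/2 + a^2/2*(L*s) + (1-2*a)/2*(L*s)
      + L^2*s^2/4 + (1+a)/4*(L^2*s^2)) * V ≤ 0 := by
    apply mul_nonpos_of_nonpos_of_nonneg _ hV
    have hb : L*s ≤ a/10 := haa ▸ hLs
    have hbsq : (L*s)^2 ≤ (a/10)*(L*s) := by nlinarith only [hb, hb0]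
    have haq : a^2 ≤ (1/10)*a := by nlinarith only [ha10, ha0, mul_le_mul_of_nonneg_left ha10 ha0.le]
    nlinarith only [mul_le_mul_of_nonneg_left hb ha0.le, mul_le_mul_of_nonneg_left hb (sq_nonneg a), hbsq, haq, mul_nonneg ha0.le hb0, ha0, hb0, hb, ha10, haa]
  have hR0 : (3*a/8*μ - a*(1+a)*(μ/2)) * R ≤ 0 := by
    apply mul_nonpos_of_nonpos_of_nonneg _ hR
    nlinarith only [mul_pos ha0 hμ0, mul_nonneg (mul_nonneg ha0.le ha0.le) hμ0.le]
  have hFG : (a/8 - a*(1+a)) * F + (3*a/32*s)*G + a^2/2*(G/L) + ((1+a)*s/4)*G + (a*s*(1+a)/2)*G ≤ 0 := by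
    have hμdL : μ/L ≤ 1 := (div_le_one hL0).mpr hμL
    have h1 : μ*(G/L) ≤ G := by
      have h2 : (μ/L)*G ≤ 1*G := mul_le_mul_of_nonneg_right hμdL hG
      have h3 : μ*(G/L) = (μ/L)*G := by ring
      linarith only [h2, h3]
    have hq : a^2/2*(G/L) ≤ s/2*G := by
      rw [ha2]
      have := mul_le_mul_of_nonneg_left h1 (by linarith only [hs0] : (0:ℝ) ≤ s/2)
      linarith only [this]
    have hcG' : (0:ℝ) ≤ 3*a/32*s + s/2 + (1+a)*s/4 + a*s*(1+a)/2 := by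
      nlinarith only [hs0, ha0, mul_pos ha0 hs0, mul_pos (mul_pos ha0 hs0) ha0]
    have h1' := mul_le_mul_of_nonneg_left hGF hcG'
    have hkey : a/8 - a*(1+a) + 2*L*(3*a/32*s + s/2 + (1+a)*s/4 + a*s*(1+a)/2) ≤ 0 := by
      have hb : L*s ≤ a/10 := hLs
      have haq : a^2 ≤ (1/10)*a := by nlinarith only [ha10, ha0, mul_le_mul_of_nonneg_left ha10 ha0.le]
      nlinarith only [mul_le_mul_of_nonneg_left hb ha0.le,
        mul_le_mul_of_nonneg_left hb (mul_nonneg ha0.le ha0.le),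
        mul_nonneg ha0.le hb0, mul_nonneg (mul_nonneg ha0.le ha0.le) hb0,
        mul_pos ha0 ha0, hb, ha0, hb0, haq]
    have h2 := mul_le_mul_of_nonneg_right hkey hF
    linarith only [h1', h2, hq]
  -- assemble
  have hdesc' : F' ≤ F + σ * p + L * s / 2 * V := hdesc
  have hq1 : σ^2*D = s*D := by rw [hσ2]
  have hq2 : ((1+a)*σ)^2*G = (1+a)^2*(s*G) := by rw [mul_pow, hσ2]; ring
  have hq3 : 2*(1+a)*σ^2*c = 2*(1+a)*(s*c) := by rw [hσ2]; ring
  have hq4 : 2*((1+a)*σ)*(σ*G) = 2*(1+a)*(s*G) := by rw [← hσ2]; ring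
  have hq5 : 2*((1+a)*σ)*(2*τ*ρ) = 4*(1+a)*(a*ρ) := by rw [haa]; ring
  linarith only [hA, hB, hC, hD4, hE5, hF6, hV0, hR0, hFG, hdesc', hq1, hq2, hq3, hq4, hq5]


lemma base_ineq (a σ s L μ F0 G0 R0 : ℝ) (ha0 : 0 < a) (hσ2 : σ ^ 2 = s) (hL0 : 0 < L)
    (hμ0 : 0 ≤ μ) (hG0 : 0 ≤ G0) (hR0 : 0 ≤ R0)
    (hGR : G0 ≤ L ^ 2 * R0) (hF0 : F0 ≤ L / 2 * R0) :
    F0 + 1/4 * (2 * σ / (1 + a)) ^ 2 * G0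
      + 1/4 * (2 * ((a - 1) / (1 + a) * σ) ^ 2 * G0 + 8 * μ * R0)
      ≤ ((3 - 2 * a + a ^ 2) / (2 + 4 * a + 2 * a ^ 2) * (s * L) + 2 * μ / L + (1 + a) / 2)
        * (L * R0) := by
  have hd : (0:ℝ) < 1 + a := by linarith
  have hd2 : (0:ℝ) < 2 + 4 * a + 2 * a ^ 2 := by nlinarith
  have hcoef : 1/4 * (2 * σ / (1 + a)) ^ 2 + 1/2 * ((a - 1) / (1 + a) * σ) ^ 2
      = (3 - 2 * a + a ^ 2) / (2 + 4 * a + 2 * a ^ 2) * s := by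
    rw [← hσ2]
    field_simp
    ring
  have hcnn : (0:ℝ) ≤ (3 - 2 * a + a ^ 2) / (2 + 4 * a + 2 * a ^ 2) * s := by
    rw [← hcoef]
    positivity
  have hterm2 : 2 * μ / L * (L * R0) = 2 * μ * R0 := by field_simp
  have h1 : (1/4 * (2 * σ / (1 + a)) ^ 2 + 1/2 * ((a - 1) / (1 + a) * σ) ^ 2) * G0
      ≤ (3 - 2 * a + a ^ 2) / (2 + 4 * a + 2 * a ^ 2) * s * (L ^ 2 * R0) := by
    rw [hcoef]
    exact mul_le_mul_of_nonneg_left hGR hcnn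
  have h3 : L / 2 * R0 ≤ (1 + a) / 2 * (L * R0) := by nlinarith [mul_nonneg hL0.le hR0, mul_nonneg (mul_nonneg ha0.le hL0.le) hR0]
  have hrhs : ((3 - 2 * a + a ^ 2) / (2 + 4 * a + 2 * a ^ 2) * (s * L) + 2 * μ / L + (1 + a) / 2) * (L * R0)
      = (3 - 2 * a + a ^ 2) / (2 + 4 * a + 2 * a ^ 2) * s * (L ^ 2 * R0) + 2 * μ * R0 + (1 + a) / 2 * (L * R0) := by
    rw [← hterm2]; ring
  rw [hrhs]
  linarith only [h1, h3, hF0]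

section helpers
variable {H : Type*} [NormedAddCommGroup H] [InnerProductSpace ℝ H]

lemma norm_comb (α β γ : ℝ) (u w z : H) :
    ‖α • u + β • w + γ • z‖ ^ 2 = α ^ 2 * ‖u‖ ^ 2 + β ^ 2 * ‖w‖ ^ 2 + γ ^ 2 * ‖z‖ ^ 2
      + 2 * α * β * ⟪u, w⟫ + 2 * α * γ * ⟪u, z⟫ + 2 * β * γ * ⟪w, z⟫ := by
  have h : ∀ y : H, ‖y‖ ^ 2 = ⟪y, y⟫ := fun y => (real_inner_self_eq_norm_sq y).symm
  rw [h, h, h, h]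
  simp only [inner_add_left, inner_add_right, real_inner_smul_left, real_inner_smul_right]
  rw [real_inner_comm w u, real_inner_comm z u, real_inner_comm z w]
  ring

lemma norm_add3_sq_le (u w z : H) :
    ‖u + w + z‖ ^ 2 ≤ 3 * (‖u‖ ^ 2 + ‖w‖ ^ 2 + ‖z‖ ^ 2) := by
  have h : ‖(1:ℝ) • u + (1:ℝ) • w + (1:ℝ) • z‖ ^ 2 = ‖u‖^2 + ‖w‖^2 + ‖z‖^2
      + 2*1*1*⟪u,w⟫ + 2*1*1*⟪u,z⟫ + 2*1*1*⟪w,z⟫ := by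
    rw [norm_comb]; ring
  simp only [one_smul] at h
  nlinarith [real_inner_le_norm u w, real_inner_le_norm u z, real_inner_le_norm w z,
    norm_nonneg u, norm_nonneg w, norm_nonneg z, sq_nonneg (‖u‖-‖w‖), sq_nonneg (‖u‖-‖z‖),
    sq_nonneg (‖w‖-‖z‖)]

lemma norm_add2_sq_le (u w : H) :
    ‖u + w‖ ^ 2 ≤ 2 * ‖u‖ ^ 2 + 2 * ‖w‖ ^ 2 := by
  have h := norm_comb 1 1 0 u w 0
  simp only [one_smul, zero_smul, add_zero] at h
  nlinarith [real_inner_le_norm u w, sq_nonneg (‖u‖ - ‖w‖)]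

lemma norm_sub_smul_sq (c : ℝ) (w g : H) :
    ‖w - c • g‖ ^ 2 = ‖w‖ ^ 2 - 2 * c * ⟪w, g⟫ + c ^ 2 * ‖g‖ ^ 2 := by
  have h := norm_comb 1 (-c) 0 w g 0
  simp only [one_smul, zero_smul, add_zero] at h
  rw [sub_eq_add_neg, ← neg_smul]
  rw [h]; ring

variable [CompleteSpace H]

lemma descent_lemma (L : ℝ) (f : H → ℝ) (f' : H → H)
    (hgrad : ∀ z, HasGradientAt f (f' z) z)
    (hLip : ∀ z w, ‖f' z - f' w‖ ≤ L * ‖z - w‖) (z w : H) :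
    f w ≤ f z + ⟪f' z, w - z⟫ + L / 2 * ‖w - z‖ ^ 2 := by
  set u := w - z with hu
  have hline : ∀ t : ℝ, HasDerivAt (fun t : ℝ => z + t • u) u t := by
    intro t
    simpa using ((hasDerivAt_id t).smul_const u).const_add z
  have hcomp : ∀ t : ℝ, HasDerivAt (fun t : ℝ => f (z + t • u)) ⟪f' (z + t • u), u⟫ t := by
    intro t
    have h1 := (hgrad (z + t • u)).hasFDerivAt.comp_hasDerivAt t (hline t)
    simp at h1
    exact h1
  set φ : ℝ → ℝ := fun t => f (z + t • u) - t * ⟪f' z, u⟫ - L / 2 * t ^ 2 * ‖u‖ ^ 2 with hφ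
  have hφd : ∀ t : ℝ, HasDerivAt φ (⟪f' (z + t • u), u⟫ - ⟪f' z, u⟫ - L * t * ‖u‖ ^ 2) t := by
    intro t
    have h2 : HasDerivAt (fun t : ℝ => t * ⟪f' z, u⟫) ⟪f' z, u⟫ t := by
      simpa using (hasDerivAt_id t).mul_const ⟪f' z, u⟫
    have h3 : HasDerivAt (fun t : ℝ => L / 2 * t ^ 2 * ‖u‖ ^ 2) (L * t * ‖u‖ ^ 2) t := by
      have := ((hasDerivAt_pow 2 t).const_mul (L / 2)).mul_const (‖u‖ ^ 2)
      refine this.congr_deriv ?_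
      simp only [Nat.cast_ofNat, show (2:ℕ) - 1 = 1 from rfl, pow_one]
      ring
    exact ((hcomp t).sub h2).sub h3
  have hmono : φ 1 ≤ φ 0 := by
    have h0m : (0:ℝ) ∈ Set.Icc (0:ℝ) 1 := by norm_num
    have h1m : (1:ℝ) ∈ Set.Icc (0:ℝ) 1 := by norm_num
    have hA : AntitoneOn φ (Set.Icc (0:ℝ) 1) := antitoneOn_of_deriv_nonpos (convex_Icc (0:ℝ) 1)
      (Continuous.continuousOn (by
        have : Continuous φ := by
          have : Differentiable ℝ φ := fun t => (hφd t).differentiableAt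
          exact this.continuous
        exact this))
      (fun t ht => ((hφd t).differentiableAt).differentiableWithinAt)
      (fun t ht => by
        rw [(hφd t).deriv]
        have ht' : t ∈ Set.Ioo (0:ℝ) 1 := by rwa [interior_Icc] at ht
        have ht0 : 0 < t := ht'.1
        have hcs : ⟪f' (z + t • u) - f' z, u⟫ ≤ ‖f' (z + t • u) - f' z‖ * ‖u‖ :=
          real_inner_le_norm _ _
        have hl : ‖f' (z + t • u) - f' z‖ ≤ L * (t * ‖u‖) := by
          have := hLip (z + t • u) z
          simpa [norm_smul, abs_of_pos ht0, mul_assoc] using this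
        have h4 : ⟪f' (z + t • u), u⟫ - ⟪f' z, u⟫ ≤ L * t * ‖u‖ ^ 2 := by
          have h5 : ⟪f' (z + t • u) - f' z, u⟫ = ⟪f' (z + t • u), u⟫ - ⟪f' z, u⟫ := by
            rw [inner_sub_left]
          nlinarith [norm_nonneg u, norm_nonneg (f' (z + t • u) - f' z),
            mul_le_mul_of_nonneg_right hl (norm_nonneg u)]
        linarith)
    exact hA h0m h1m zero_le_one
  have h0 : φ 0 = f z := by simp [hφ]
  have h1 : φ 1 = f (z + u) - ⟪f' z, u⟫ - L / 2 * ‖u‖ ^ 2 := by simp [hφ]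
  have hz : z + u = w := by rw [hu]; abel
  rw [h0, h1, hz] at hmono
  linarith

end helpers

set_option maxHeartbeats 1000000 in
theorem stmt9
    {n : ℕ} (μ L : ℝ) (hμ : 0 < μ) (hμL : μ ≤ L)
    (f : EuclideanSpace ℝ (Fin n) → ℝ)
    (f' : EuclideanSpace ℝ (Fin n) → EuclideanSpace ℝ (Fin n))
    (hgrad : ∀ z, HasGradientAt f (f' z) z)
    (hLip : ∀ z w, ‖f' z - f' w‖ ≤ L * ‖z - w‖)
    (hsc : ∀ z w, f w ≥ f z + ⟪f' z, w - z⟫ + μ / 2 * ‖w - z‖ ^ 2)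
    (xstar : EuclideanSpace ℝ (Fin n)) (hmin : ∀ z, f xstar ≤ f z)
    (s : ℝ) (hs0 : 0 < s) (hs : s ≤ μ / (100 * L ^ 2))
    (x v : ℕ → EuclideanSpace ℝ (Fin n))
    (hv0 : v 0 = -((2 * Real.sqrt s / (1 + Real.sqrt (μ * s))) • f' (x 0)))
    (hx : ∀ k : ℕ, x (k + 1) - x k = Real.sqrt s • v k)
    (hv : ∀ k : ℕ, v (k + 1) - v k = -((2 * Real.sqrt (μ * s)) • v k)
      - Real.sqrt s • (f' (x (k + 1)) - f' (x k))
      - (Real.sqrt s * (1 + Real.sqrt (μ * s))) • f' (x k))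
    : ∀ k : ℕ, f (x k) - f xstar ≤
      ((3 - 2 * Real.sqrt (μ * s) + μ * s) / (2 + 4 * Real.sqrt (μ * s) + 2 * (μ * s)) * (s * L)
        + 2 * μ / L + (1 + Real.sqrt (μ * s)) / 2) *
      (L * ‖x 0 - xstar‖ ^ 2) * (1 - Real.sqrt (μ * s) / 8) ^ k := by
  have hL0 : 0 < L := lt_of_lt_of_le hμ hμL
  set σ := Real.sqrt s with hσdef
  set τ := Real.sqrt μ with hτdef
  set a := Real.sqrt (μ * s) with hadef
  have hσ0 : 0 < σ := Real.sqrt_pos.mpr hs0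
  have hτ0 : 0 < τ := Real.sqrt_pos.mpr hμ
  have hσ2 : σ ^ 2 = s := Real.sq_sqrt hs0.le
  have hτ2 : τ ^ 2 = μ := Real.sq_sqrt hμ.le
  have haa : a = τ * σ := by rw [hadef, hσdef, hτdef, Real.sqrt_mul hμ.le]
  have ha0 : 0 < a := haa ▸ mul_pos hτ0 hσ0
  have ha2 : a ^ 2 = μ * s := by rw [haa, mul_pow, hσ2, hτ2]
  clear_value σ τ a
  -- step size facts
  have ha10 : τ * σ ≤ 1 / 10 := by
    have h1 : μ * s ≤ μ * (μ / (100 * L ^ 2)) := mul_le_mul_of_nonneg_left hs hμ.le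
    have heq : μ * (μ / (100 * L ^ 2)) = μ ^ 2 / (100 * L ^ 2) := by ring
    have h3 : μ ^ 2 / (100 * L ^ 2) ≤ 1 / 100 := by
      rw [div_le_div_iff₀ (by positivity) (by norm_num)]
      nlinarith
    have hsq : (τ * σ) ^ 2 ≤ 1 / 100 := by rw [mul_pow, hσ2, hτ2]; linarith
    nlinarith [hsq, mul_pos hτ0 hσ0]
  have hLs : L * s ≤ τ * σ / 10 := by
    have h1 : s * (100 * L ^ 2) ≤ μ := (le_div_iff₀ (by positivity)).mp hs
    have hsq : (L * s) ^ 2 ≤ (τ * σ) ^ 2 / 100 := by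
      have h2 : (τ * σ) ^ 2 = μ * s := by rw [mul_pow, hσ2, hτ2]
      nlinarith [h1, hs0, h2]
    nlinarith [hsq, mul_nonneg hL0.le hs0.le, mul_pos hτ0 hσ0]
  -- gradient facts
  have hdesc : ∀ z w, f w ≤ f z + ⟪f' z, w - z⟫ + L / 2 * ‖w - z‖ ^ 2 :=
    descent_lemma L f f' hgrad hLip
  have hGF : ∀ z, ‖f' z‖ ^ 2 ≤ 2 * L * (f z - f xstar) := by
    intro z
    have h := hdesc z (z - (1 / L) • f' z)
    have hy : z - (1 / L) • f' z - z = -((1 / L) • f' z) := by abel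
    rw [hy] at h
    have hi : ⟪f' z, -((1 / L) • f' z)⟫ = -(1 / L * ‖f' z‖ ^ 2) := by
      rw [inner_neg_right, real_inner_smul_right, real_inner_self_eq_norm_sq]
    have hn : ‖-((1 / L) • f' z)‖ ^ 2 = (1 / L) ^ 2 * ‖f' z‖ ^ 2 := by
      rw [norm_neg, norm_smul, Real.norm_eq_abs, mul_pow, sq_abs]
    rw [hi, hn] at h
    have hm := hmin (z - (1 / L) • f' z)
    have hsimp : 1 / L * ‖f' z‖ ^ 2 - L / 2 * ((1 / L) ^ 2 * ‖f' z‖ ^ 2) = ‖f' z‖ ^ 2 / (2 * L) := by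
      field_simp
      ring
    have h2 : ‖f' z‖ ^ 2 / (2 * L) ≤ f z - f xstar := by linarith
    rw [div_le_iff₀ (by positivity)] at h2
    linarith
  have hgrad0 : f' xstar = 0 := by
    have h := hGF xstar
    simp only [sub_self, mul_zero] at h
    have h2 : ‖f' xstar‖ ^ 2 = 0 := le_antisymm h (sq_nonneg _)
    have h3 : ‖f' xstar‖ = 0 := by
      have := sq_eq_zero_iff.mp h2
      exact this
    exact norm_eq_zero.mp h3
  have hgn : ∀ z, ‖f' z‖ ≤ L * ‖z - xstar‖ := by
    intro z
    have := hLip z xstar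
    rwa [hgrad0, sub_zero] at this
  set w : ℕ → EuclideanSpace ℝ (Fin n) :=
    fun k => v k + (2 * τ) • (x k - xstar) + σ • f' (x k) with hwdef
  set E : ℕ → ℝ := fun k => f (x k) - f xstar + 1/4 * ‖v k‖ ^ 2 + 1/4 * ‖w k‖ ^ 2 with hEdef
  clear_value w E
  have hE_lb : ∀ k, f (x k) - f xstar ≤ E k := by
    intro k
    have h1 : (0:ℝ) ≤ ‖v k‖ ^ 2 := sq_nonneg _
    have h2 : (0:ℝ) ≤ ‖w k‖ ^ 2 := sq_nonneg _
    simp only [hEdef]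
    linarith
  have hstep : ∀ k, E (k + 1) ≤ (1 - a / 8) * E k := by
    intro k
    have hxk : x (k + 1) = σ • v k + x k := sub_eq_iff_eq_add.mp (hx k)
    have hv' : v (k + 1) = (1 - 2 * (τ * σ)) • v k - σ • (f' (x (k + 1)) - f' (x k))
        - ((1 + τ * σ) * σ) • f' (x k) := by
      have h1 : v (k + 1) = v k + (-((2 * a) • v k) - σ • (f' (x (k + 1)) - f' (x k))
          - (σ * (1 + a)) • f' (x k)) := by rw [← hv k]; abel
      rw [h1, haa]; module
    have hw' : w (k + 1) = w k - ((1 + τ * σ) * σ) • f' (x k) := by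
      simp only [hwdef]
      rw [hv', show x (k + 1) - xstar = σ • v k + (x k - xstar) from by rw [← hx k]; abel]
      module
    have hnv' : ‖v (k + 1)‖ ^ 2 = (1 - 2 * (τ * σ)) ^ 2 * ‖v k‖ ^ 2
        + σ ^ 2 * ‖f' (x (k + 1)) - f' (x k)‖ ^ 2
        + ((1 + τ * σ) * σ) ^ 2 * ‖f' (x k)‖ ^ 2
        - 2 * (1 - 2 * (τ * σ)) * σ * ⟪v k, f' (x (k + 1)) - f' (x k)⟫
        - 2 * (1 - 2 * (τ * σ)) * (1 + τ * σ) * σ * ⟪v k, f' (x k)⟫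
        + 2 * (1 + τ * σ) * σ ^ 2 * ⟪f' (x (k + 1)) - f' (x k), f' (x k)⟫ := by
      have h2 : v (k + 1) = (1 - 2 * (τ * σ)) • v k + (-σ) • (f' (x (k + 1)) - f' (x k))
          + (-((1 + τ * σ) * σ)) • f' (x k) := by rw [hv']; module
      rw [h2, norm_comb]; ring
    have hm : ⟪w k, f' (x k)⟫ = ⟪v k, f' (x k)⟫ + 2 * τ * ⟪x k - xstar, f' (x k)⟫
        + σ * ‖f' (x k)‖ ^ 2 := by
      simp only [hwdef]
      rw [inner_add_left, inner_add_left, real_inner_smul_left, real_inner_smul_left,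
        real_inner_self_eq_norm_sq]
    have hnw' : ‖w (k + 1)‖ ^ 2 = ‖w k‖ ^ 2
        - 2 * ((1 + τ * σ) * σ) * (⟪v k, f' (x k)⟫ + 2 * τ * ⟪x k - xstar, f' (x k)⟫
          + σ * ‖f' (x k)‖ ^ 2)
        + ((1 + τ * σ) * σ) ^ 2 * ‖f' (x k)‖ ^ 2 := by
      rw [hw', norm_sub_smul_sq, hm]
    -- scalar hypotheses
    have hsmulnorm : ‖σ • v k‖ ^ 2 = s * ‖v k‖ ^ 2 := by
      rw [norm_smul, Real.norm_eq_abs, mul_pow, sq_abs, hσ2]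
    have hdesc_k : f (x (k + 1)) - f xstar ≤ (f (x k) - f xstar)
        + σ * ⟪v k, f' (x k)⟫ + L * s / 2 * ‖v k‖ ^ 2 := by
      have h := hdesc (x k) (x (k + 1))
      rw [hx k] at h
      rw [real_inner_smul_right, real_inner_comm] at h
      rw [hsmulnorm] at h
      linarith
    have hsc_k : (f (x k) - f xstar) + μ / 2 * ‖x k - xstar‖ ^ 2
        ≤ ⟪x k - xstar, f' (x k)⟫ := by
      have h := hsc (x k) xstar
      have hns : xstar - x k = -(x k - xstar) := by abel
      rw [hns, inner_neg_right, norm_neg, real_inner_comm] at h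
      linarith
    have hlipd : ‖f' (x (k + 1)) - f' (x k)‖ ≤ L * (σ * ‖v k‖) := by
      have h := hLip (x (k + 1)) (x k)
      rwa [hx k, norm_smul, Real.norm_eq_abs, abs_of_pos hσ0] at h
    have hDb_k : ‖f' (x (k + 1)) - f' (x k)‖ ^ 2 ≤ L ^ 2 * s * ‖v k‖ ^ 2 := by
      have h2 := pow_le_pow_left₀ (norm_nonneg _) hlipd 2
      have h3 : (L * (σ * ‖v k‖)) ^ 2 = L ^ 2 * s * ‖v k‖ ^ 2 := by
        rw [← hσ2]; ring
      linarith
    have he2_k : -(σ * ⟪v k, f' (x (k + 1)) - f' (x k)⟫) ≤ L * s * ‖v k‖ ^ 2 := by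
      have h1 : -⟪v k, f' (x (k + 1)) - f' (x k)⟫ ≤ ‖v k‖ * ‖f' (x (k + 1)) - f' (x k)‖ := by
        have h := real_inner_le_norm (v k) (-(f' (x (k + 1)) - f' (x k)))
        rwa [inner_neg_right, norm_neg] at h
      have h2 := mul_le_mul_of_nonneg_left h1 hσ0.le
      have h3 := mul_le_mul_of_nonneg_left hlipd (mul_nonneg hσ0.le (norm_nonneg (v k)))
      have heq : σ * (‖v k‖ * (L * (σ * ‖v k‖))) = L * s * ‖v k‖ ^ 2 := by
        rw [← hσ2]; ring
      nlinarith [h2, h3, heq]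
    have hc_k : 2 * ⟪f' (x (k + 1)) - f' (x k), f' (x k)⟫
        ≤ ‖f' (x (k + 1)) - f' (x k)‖ ^ 2 + ‖f' (x k)‖ ^ 2 := by
      nlinarith only [real_inner_le_norm (f' (x (k + 1)) - f' (x k)) (f' (x k)),
        sq_nonneg (‖f' (x (k + 1)) - f' (x k)‖ - ‖f' (x k)‖)]
    have hp_k : 2 * (σ * ⟪v k, f' (x k)⟫) ≤ L * s * ‖v k‖ ^ 2 + ‖f' (x k)‖ ^ 2 / L := by
      have h1 : ⟪v k, f' (x k)⟫ ≤ ‖v k‖ * ‖f' (x k)‖ := real_inner_le_norm _ _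
      have h2 := mul_le_mul_of_nonneg_left h1
        (by positivity : (0:ℝ) ≤ 2 * L * σ)
      have hkey : 2 * L * (σ * ⟪v k, f' (x k)⟫) ≤ L ^ 2 * s * ‖v k‖ ^ 2 + ‖f' (x k)‖ ^ 2 := by
        have heq : L ^ 2 * σ ^ 2 * ‖v k‖ ^ 2 = L ^ 2 * s * ‖v k‖ ^ 2 := by rw [hσ2]
        nlinarith only [h2, sq_nonneg (L * σ * ‖v k‖ - ‖f' (x k)‖), heq]
      have h3 : 2 * (σ * ⟪v k, f' (x k)⟫) - L * s * ‖v k‖ ^ 2 ≤ ‖f' (x k)‖ ^ 2 / L := by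
        rw [le_div_iff₀ hL0]
        nlinarith only [hkey]
      linarith
    have hW3_k : ‖w k‖ ^ 2 ≤ 3 * (‖v k‖ ^ 2 + 4 * μ * ‖x k - xstar‖ ^ 2
        + s * ‖f' (x k)‖ ^ 2) := by
      have h := norm_add3_sq_le (v k) ((2 * τ) • (x k - xstar)) (σ • f' (x k))
      have h1 : ‖(2 * τ) • (x k - xstar)‖ ^ 2 = 4 * μ * ‖x k - xstar‖ ^ 2 := by
        rw [norm_smul, Real.norm_eq_abs, mul_pow, sq_abs, ← hτ2]; ring
      have h2 : ‖σ • f' (x k)‖ ^ 2 = s * ‖f' (x k)‖ ^ 2 := by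
        rw [norm_smul, Real.norm_eq_abs, mul_pow, sq_abs, hσ2]
      rw [h1, h2] at h
      have h3 : w k = v k + (2 * τ) • (x k - xstar) + σ • f' (x k) := by simp only [hwdef]
      rw [h3]
      linarith [h]
    have hkey := key_ineq σ τ L s μ (f (x k) - f xstar) (f (x (k + 1)) - f xstar)
      (‖v k‖ ^ 2) (‖f' (x k)‖ ^ 2) (‖x k - xstar‖ ^ 2)
      (‖f' (x (k + 1)) - f' (x k)‖ ^ 2) (‖w k‖ ^ 2)
      ⟪v k, f' (x k)⟫ ⟪v k, f' (x (k + 1)) - f' (x k)⟫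
      ⟪f' (x (k + 1)) - f' (x k), f' (x k)⟫ ⟪x k - xstar, f' (x k)⟫
      hσ2 hτ2 hσ0 hτ0 hL0 hμL ha10 hLs
      (by linarith [hmin (x k)]) (sq_nonneg _) (sq_nonneg _) (sq_nonneg _) (sq_nonneg _)
      (sq_nonneg _) hdesc_k hsc_k (hGF (x k)) hDb_k he2_k hc_k hp_k hW3_k
    calc E (k + 1) = f (x (k + 1)) - f xstar + 1/4 * ‖v (k + 1)‖ ^ 2
          + 1/4 * ‖w (k + 1)‖ ^ 2 := by simp only [hEdef]
      _ ≤ (1 - τ * σ / 8) * ((f (x k) - f xstar) + 1/4 * ‖v k‖ ^ 2 + 1/4 * ‖w k‖ ^ 2) := by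
          rw [hnv', hnw']
          exact hkey
      _ = (1 - a / 8) * E k := by rw [haa]; simp only [hEdef]
  have hbase : E 0 ≤
      ((3 - 2 * a + μ * s) / (2 + 4 * a + 2 * (μ * s)) * (s * L)
        + 2 * μ / L + (1 + a) / 2) * (L * ‖x 0 - xstar‖ ^ 2) := by
    have h1pa : (0:ℝ) < 1 + a := by linarith
    have hnv0 : ‖v 0‖ ^ 2 = (2 * σ / (1 + a)) ^ 2 * ‖f' (x 0)‖ ^ 2 := by
      rw [hv0, norm_neg, norm_smul, Real.norm_eq_abs, mul_pow, sq_abs]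
    have hw0 : w 0 = ((a - 1) / (1 + a) * σ) • f' (x 0) + (2 * τ) • (x 0 - xstar) := by
      simp only [hwdef]
      rw [hv0, show (a - 1) / (1 + a) * σ = σ - 2 * σ / (1 + a) from by field_simp; ring]
      module
    have hnw0 : ‖w 0‖ ^ 2 ≤ 2 * ((a - 1) / (1 + a) * σ) ^ 2 * ‖f' (x 0)‖ ^ 2
        + 8 * μ * ‖x 0 - xstar‖ ^ 2 := by
      rw [hw0]
      have h := norm_add2_sq_le (((a - 1) / (1 + a) * σ) • f' (x 0)) ((2 * τ) • (x 0 - xstar))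
      have e1 : ‖((a - 1) / (1 + a) * σ) • f' (x 0)‖ ^ 2
          = ((a - 1) / (1 + a) * σ) ^ 2 * ‖f' (x 0)‖ ^ 2 := by
        rw [norm_smul, Real.norm_eq_abs, mul_pow, sq_abs]
      have e2 : ‖(2 * τ) • (x 0 - xstar)‖ ^ 2 = 4 * μ * ‖x 0 - xstar‖ ^ 2 := by
        rw [norm_smul, Real.norm_eq_abs, mul_pow, sq_abs, ← hτ2]; ring
      rw [e1, e2] at h
      linarith
    have hGR : ‖f' (x 0)‖ ^ 2 ≤ L ^ 2 * ‖x 0 - xstar‖ ^ 2 := by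
      have h := pow_le_pow_left₀ (norm_nonneg _) (hgn (x 0)) 2
      nlinarith [h]
    have hF0 : f (x 0) - f xstar ≤ L / 2 * ‖x 0 - xstar‖ ^ 2 := by
      have h := hdesc xstar (x 0)
      rw [hgrad0, inner_zero_left] at h
      linarith
    have hb := base_ineq a σ s L μ (f (x 0) - f xstar) (‖f' (x 0)‖ ^ 2) (‖x 0 - xstar‖ ^ 2)
      ha0 hσ2 hL0 hμ.le (sq_nonneg _) (sq_nonneg _) hGR hF0
    rw [ha2] at hb
    have hE0 : E 0 = f (x 0) - f xstar + 1/4 * ‖v 0‖ ^ 2 + 1/4 * ‖w 0‖ ^ 2 := by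
      simp only [hEdef]
    rw [hE0, hnv0]
    linarith [hb, hnw0]
  have hrate : (0:ℝ) ≤ 1 - a / 8 := by
    have : a ≤ 1/10 := haa ▸ ha10
    linarith
  have hC0 : ∀ k : ℕ, E k ≤
      ((3 - 2 * a + μ * s) / (2 + 4 * a + 2 * (μ * s)) * (s * L)
        + 2 * μ / L + (1 + a) / 2) * (L * ‖x 0 - xstar‖ ^ 2) * (1 - a / 8) ^ k := by
    intro k
    induction k with
    | zero => simpa using hbase
    | succ k ih =>
      calc E (k + 1) ≤ (1 - a / 8) * E k := hstep k
        _ ≤ (1 - a / 8) * (((3 - 2 * a + μ * s) / (2 + 4 * a + 2 * (μ * s)) * (s * L)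
            + 2 * μ / L + (1 + a) / 2) * (L * ‖x 0 - xstar‖ ^ 2) * (1 - a / 8) ^ k) :=
          mul_le_mul_of_nonneg_left ih hrate
        _ = ((3 - 2 * a + μ * s) / (2 + 4 * a + 2 * (μ * s)) * (s * L)
            + 2 * μ / L + (1 + a) / 2) * (L * ‖x 0 - xstar‖ ^ 2) * (1 - a / 8) ^ (k + 1) := by
          ring
  intro k
  exact le_trans (hE_lb k) (hC0 k)
end
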